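/- Let 𝒮 be a collection of dyadic cubes in ℝ^n such that for every Q ∈ 𝒮, |⋃_{Q'∈𝒮, Q'⊊Q} Q'| ≤ |Q|/4. Let g ≥ 0 be locally integrable, let l ∈ ℤ, and set 𝒮_l := {Q ∈ 𝒮 : 2^{−l−1} < ⟨g⟩_Q ≤ 2^{−l}}. For Q ∈ 𝒮_l let E_Q := Q \ ⋃{Q' : Q' ∈ 𝒮_l, Q' ⊊ Q, Q' maximal with respect to inclusion among such cubes}. Then for every Q ∈ 𝒮_l: ⟨g·1_{E_Q}⟩_Q ≥ (1/2)⟨g⟩_Q. -/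

import Mathlib

open MeasureTheory ENNReal NNReal Set

noncomputable section

namespace Paper

abbrev Rn (n : ℕ) := Fin n → ℝ

/-- A dyadic cube in `ℝⁿ`: `∏ᵢ [2^{-k} mᵢ, 2^{-k}(mᵢ+1))`. -/
def IsDyadicCube (n : ℕ) (Q : Set (Rn n)) : Prop :=
  ∃ (k : ℤ) (m : Fin n → ℤ), Q =
    {x : Rn n | ∀ i, (2:ℝ) ^ (-k) * m i ≤ x i ∧ x i < (2:ℝ) ^ (-k) * (m i + 1)}

/-- A sparse collection of dyadic cubes. -/
def IsSparse (n : ℕ) (S : Set (Set (Rn n))) : Prop :=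
  (∀ Q ∈ S, IsDyadicCube n Q) ∧
  ∃ E : Set (Rn n) → Set (Rn n),
    (∀ Q ∈ S, E Q ⊆ Q ∧ MeasurableSet (E Q) ∧ volume Q ≤ 2 * volume (E Q)) ∧
    S.Pairwise (fun Q Q' => Disjoint (E Q) (E Q'))

/-- Average `⟨w⟩_Q = |Q|⁻¹ ∫_Q w`. -/
def dAvg {n : ℕ} (w : Rn n → ℝ≥0∞) (Q : Set (Rn n)) : ℝ≥0∞ :=
  (volume Q)⁻¹ * ∫⁻ x in Q, w x

/-- Weighted average `⟨f⟩_Q^σ = σ(Q)⁻¹ ∫_Q f σ`. -/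
def dAvgW {n : ℕ} (σ f : Rn n → ℝ≥0∞) (Q : Set (Rn n)) : ℝ≥0∞ :=
  (∫⁻ x in Q, σ x)⁻¹ * ∫⁻ x in Q, f x * σ x

/-- Local integrability (w.r.t. dyadic cubes). -/
def LocInt {n : ℕ} (w : Rn n → ℝ≥0∞) : Prop :=
  ∀ Q : Set (Rn n), IsDyadicCube n Q → (∫⁻ x in Q, w x) < ∞

/-- The sparse operator `A_𝒮^r g = (∑_{Q∈𝒮} ⟨g⟩_Q^r 1_Q)^{1/r}`. -/
def sparseOp {n : ℕ} (S : Set (Set (Rn n))) (r : ℝ) (g : Rn n → ℝ≥0∞) (x : Rn n) : ℝ≥0∞ :=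
  (∑' Q : S, (Q : Set (Rn n)).indicator (fun _ => (dAvg g Q) ^ r) x) ^ (1 / r)

/-- `‖g‖_{L^p(w)} = (∫ g^p w)^{1/p}`. -/
def lpNorm {n : ℕ} (p : ℝ) (w g : Rn n → ℝ≥0∞) : ℝ≥0∞ :=
  (∫⁻ x, (g x) ^ p * w x) ^ (1 / p)

/-- `‖g‖_{L^{p,∞}(w)} = sup_{t>0} t · w({g > t})^{1/p}`. -/
def wLpNorm {n : ℕ} (p : ℝ) (w g : Rn n → ℝ≥0∞) : ℝ≥0∞ :=
  ⨆ (t : ℝ≥0) (_ : 0 < t), (t : ℝ≥0∞) * (∫⁻ x in {x | (t : ℝ≥0∞) < g x}, w x) ^ (1 / p)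

/-- `‖A_𝒮^r(·σ)‖_{L^p(σ)→L^p(w)}`, the least constant in the strong-type bound. -/
def opNormStrong {n : ℕ} (S : Set (Set (Rn n))) (r p : ℝ) (w σ : Rn n → ℝ≥0∞) : ℝ≥0∞ :=
  sInf {C : ℝ≥0∞ | ∀ f : Rn n → ℝ≥0∞, Measurable f →
    lpNorm p w (sparseOp S r (fun x => f x * σ x)) ≤ C * lpNorm p σ f}

/-- `‖A_𝒮^r(·σ)‖_{L^p(σ)→L^{p,∞}(w)}`, the least constant in the weak-type bound. -/
def opNormWeak {n : ℕ} (S : Set (Set (Rn n))) (r p : ℝ) (w σ : Rn n → ℝ≥0∞) : ℝ≥0∞ :=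
  sInf {C : ℝ≥0∞ | ∀ f : Rn n → ℝ≥0∞, Measurable f →
    wLpNorm p w (sparseOp S r (fun x => f x * σ x)) ≤ C * lpNorm p σ f}

/-- Two-weight (dyadic) `A_p` characteristic. -/
def ApChar {n : ℕ} (p : ℝ) (w σ : Rn n → ℝ≥0∞) : ℝ≥0∞ :=
  ⨆ (Q : Set (Rn n)) (_ : IsDyadicCube n Q), dAvg w Q * (dAvg σ Q) ^ (p - 1)

/-- Dyadic maximal operator. -/
def dyadicM {n : ℕ} (g : Rn n → ℝ≥0∞) (x : Rn n) : ℝ≥0∞ :=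
  ⨆ (Q : Set (Rn n)) (_ : IsDyadicCube n Q ∧ x ∈ Q), dAvg g Q

/-- Fujii–Wilson (dyadic) `A_∞` characteristic. -/
def AinfChar {n : ℕ} (w : Rn n → ℝ≥0∞) : ℝ≥0∞ :=
  ⨆ (Q : Set (Rn n)) (_ : IsDyadicCube n Q),
    (∫⁻ x in Q, w x)⁻¹ * ∫⁻ x in Q, dyadicM (Q.indicator w) x

/-- The testing constant `𝒯_s` (Theorem 1.4 uses `s = r`). -/
def testT {n : ℕ} (S : Set (Set (Rn n))) (p s : ℝ) (w σ : Rn n → ℝ≥0∞) : ℝ≥0∞ :=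
  ⨆ (R : Set (Rn n)) (_ : R ∈ S),
    (∫⁻ x in R, σ x) ^ (-(s / p)) *
      lpNorm (p / s) w (fun x => ∑' Q : {Q : Set (Rn n) // Q ∈ S ∧ Q ⊆ R},
        (Q : Set (Rn n)).indicator (fun _ => (dAvg σ Q) ^ s) x)

/-- The dual testing constant `𝒯*`. -/
def testTstar {n : ℕ} (S : Set (Set (Rn n))) (p r : ℝ) (w σ : Rn n → ℝ≥0∞) : ℝ≥0∞ :=
  ⨆ (R : Set (Rn n)) (_ : R ∈ S),
    (∫⁻ x in R, w x) ^ (-(1 - r / p)) *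
      lpNorm ((p / r) / (p / r - 1)) σ (fun x => ∑' Q : {Q : Set (Rn n) // Q ∈ S ∧ Q ⊆ R},
        (Q : Set (Rn n)).indicator (fun _ => (dAvg σ Q) ^ (r - 1) * dAvg w Q) x)


lemma dyadic_eq_pi {n : ℕ} (k : ℤ) (m : Fin n → ℤ) :
    {x : Rn n | ∀ i, (2:ℝ) ^ (-k) * m i ≤ x i ∧ x i < (2:ℝ) ^ (-k) * (m i + 1)} =
    Set.pi Set.univ (fun i => Ico ((2:ℝ) ^ (-k) * m i) ((2:ℝ) ^ (-k) * (m i + 1))) := by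
  ext x; simp [Set.mem_pi, Set.mem_Ico]

lemma dyadic_measurable {n : ℕ} {Q : Set (Rn n)} (h : IsDyadicCube n Q) : MeasurableSet Q := by
  obtain ⟨k, m, rfl⟩ := h
  rw [dyadic_eq_pi]
  exact MeasurableSet.univ_pi fun i => measurableSet_Ico

lemma dyadic_volume {n : ℕ} {Q : Set (Rn n)} (h : IsDyadicCube n Q) :
    volume Q ≠ 0 ∧ volume Q ≠ ∞ := by
  obtain ⟨k, m, rfl⟩ := h
  rw [dyadic_eq_pi, volume_pi_pi]
  have hv : ∀ i : Fin n, volume (Ico ((2:ℝ) ^ (-k) * m i) ((2:ℝ) ^ (-k) * (m i + 1)))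
      = ENNReal.ofReal ((2:ℝ) ^ (-k)) := by
    intro i; rw [Real.volume_Ico]; congr 1; ring
  rw [Finset.prod_congr rfl (fun i _ => hv i), Finset.prod_const]
  have h2 : (0:ℝ) < (2:ℝ) ^ (-k) := zpow_pos (by norm_num) _
  refine ⟨pow_ne_zero _ ?_, ?_⟩
  · exact (ENNReal.ofReal_pos.mpr h2).ne'
  · exact (ENNReal.pow_ne_top ENNReal.ofReal_ne_top)

lemma dyadic_countable (n : ℕ) : {Q : Set (Rn n) | IsDyadicCube n Q}.Countable := by
  have hsub : {Q : Set (Rn n) | IsDyadicCube n Q} ⊆ Set.range (fun p : ℤ × (Fin n → ℤ) =>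
      {x : Rn n | ∀ i, (2:ℝ) ^ (-p.1) * p.2 i ≤ x i ∧ x i < (2:ℝ) ^ (-p.1) * (p.2 i + 1)}) := by
    rintro Q ⟨k, m, rfl⟩; exact ⟨(k, m), rfl⟩
  exact (Set.countable_range _).mono hsub

lemma dyadic_1d {k1 k2 m1 m2 : ℤ} (hk : k2 ≤ k1) {t : ℝ}
    (h11 : (2:ℝ)^(-k1) * m1 ≤ t) (h12 : t < (2:ℝ)^(-k1) * (m1+1))
    (h21 : (2:ℝ)^(-k2) * m2 ≤ t) (h22 : t < (2:ℝ)^(-k2) * (m2+1)) :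
    (2:ℝ)^(-k2) * m2 ≤ (2:ℝ)^(-k1) * m1 ∧ (2:ℝ)^(-k1) * (m1+1) ≤ (2:ℝ)^(-k2) * (m2+1) := by
  have h2 : (0:ℝ) < (2:ℝ)^(-k1) := zpow_pos (by norm_num) _
  set e : ℕ := (k1 - k2).toNat with he
  have hpow : (2:ℝ)^(-k2) = (2:ℝ)^(-k1) * (2:ℝ)^e := by
    rw [← zpow_natCast (2:ℝ) e, ← zpow_add₀ (by norm_num : (2:ℝ) ≠ 0)]
    congr 1
    rw [he, Int.toNat_of_nonneg (sub_nonneg.mpr hk)]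
    ring
  have key1 : m2 * 2^e ≤ m1 := by
    have h' : (2:ℝ)^(-k1) * ((m2:ℝ) * 2^e) < (2:ℝ)^(-k1) * ((m1:ℝ)+1) := by
      calc (2:ℝ)^(-k1) * ((m2:ℝ) * 2^e) = (2:ℝ)^(-k2) * m2 := by rw [hpow]; ring
        _ ≤ t := h21
        _ < _ := h12
    have h'' : (m2:ℝ) * 2^e < (m1:ℝ) + 1 := (mul_lt_mul_iff_right₀ h2).mp h'
    have : (m2 * 2^e : ℤ) < m1 + 1 := by exact_mod_cast h''
    omega
  have key2 : m1 + 1 ≤ (m2+1) * 2^e := by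
    have h' : (2:ℝ)^(-k1) * ((m1:ℝ)) < (2:ℝ)^(-k1) * (((m2:ℝ)+1) * 2^e) := by
      calc (2:ℝ)^(-k1) * (m1:ℝ) ≤ t := h11
        _ < (2:ℝ)^(-k2) * (m2+1) := h22
        _ = (2:ℝ)^(-k1) * (((m2:ℝ)+1) * 2^e) := by rw [hpow]; ring
    have h'' : (m1:ℝ) < ((m2:ℝ)+1) * 2^e := (mul_lt_mul_iff_right₀ h2).mp h'
    have : (m1 : ℤ) < (m2+1) * 2^e := by exact_mod_cast h''
    omega
  constructor
  · rw [hpow]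
    have : (m2:ℝ) * 2^e ≤ (m1:ℝ) := by exact_mod_cast key1
    calc (2:ℝ)^(-k1) * (2:ℝ)^e * m2 = (2:ℝ)^(-k1) * ((m2:ℝ) * 2^e) := by ring
      _ ≤ (2:ℝ)^(-k1) * m1 := by nlinarith
  · rw [hpow]
    have : (m1:ℝ) + 1 ≤ ((m2:ℝ)+1) * 2^e := by exact_mod_cast key2
    calc (2:ℝ)^(-k1) * ((m1:ℝ)+1) ≤ (2:ℝ)^(-k1) * (((m2:ℝ)+1) * 2^e) := by nlinarith
      _ = (2:ℝ)^(-k1) * (2:ℝ)^e * ((m2:ℝ)+1) := by ring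

lemma dyadic_nested {n : ℕ} {Q1 Q2 : Set (Rn n)} (h1 : IsDyadicCube n Q1)
    (h2 : IsDyadicCube n Q2) (h : (Q1 ∩ Q2).Nonempty) : Q1 ⊆ Q2 ∨ Q2 ⊆ Q1 := by
  obtain ⟨k1, m1, rfl⟩ := h1
  obtain ⟨k2, m2, rfl⟩ := h2
  obtain ⟨t, ht1, ht2⟩ := h
  rcases le_total k2 k1 with hk | hk
  · left
    intro x hx
    intro i
    have hd := dyadic_1d hk (ht1 i).1 (ht1 i).2 (ht2 i).1 (ht2 i).2
    exact ⟨hd.1.trans (hx i).1, (hx i).2.trans_le hd.2⟩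
  · right
    intro x hx
    intro i
    have hd := dyadic_1d hk (ht2 i).1 (ht2 i).2 (ht1 i).1 (ht1 i).2
    exact ⟨hd.1.trans (hx i).1, (hx i).2.trans_le hd.2⟩

lemma two_mul_div_four (a : ℝ≥0∞) : 2 * (a/4) = a/2 := by
  rw [show (4:ℝ≥0∞) = 2*2 by norm_num, div_eq_mul_inv, div_eq_mul_inv,
    ENNReal.mul_inv (Or.inl (by norm_num)) (Or.inr (by norm_num))]
  calc 2 * (a * (2⁻¹ * 2⁻¹)) = (2 * 2⁻¹) * (a * 2⁻¹) := by ring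
    _ = a * 2⁻¹ := by rw [ENNReal.mul_inv_cancel two_ne_zero (by norm_num), one_mul]

lemma helper_half (b v : ℝ≥0∞) : (2 * b) * (v / 4) = (v * b) / 2 := by
  rw [← two_mul_div_four (v*b), div_eq_mul_inv, div_eq_mul_inv]; ring


/-- Section 4: for a `1/4`-packed collection, the pieces `E_Q` retain half of the average:
`⟨g 1_{E_Q}⟩_Q ≥ ½ ⟨g⟩_Q` for `Q ∈ 𝒮_l`. -/
theorem statement14 (n : ℕ) (S : Set (Set (Rn n))) (hS : ∀ Q ∈ S, IsDyadicCube n Q)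
    (hpack : ∀ Q ∈ S, volume (⋃ Q' ∈ {Q' | Q' ∈ S ∧ Q' ⊂ Q}, Q') ≤ volume Q / 4)
    (g : Rn n → ℝ≥0∞) (hg : Measurable g) (hgl : LocInt g) (l : ℤ)
    (Sl : Set (Set (Rn n)))
    (hSl : Sl = {Q' | Q' ∈ S ∧ (2 : ℝ≥0∞) ^ (-(l : ℝ) - 1) < dAvg g Q' ∧
      dAvg g Q' ≤ (2 : ℝ≥0∞) ^ (-(l : ℝ))})
    (Q : Set (Rn n)) (hQ : Q ∈ Sl)
    (EQ : Set (Rn n))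
    (hEQ : EQ = Q \ ⋃ Q' ∈ {Q' | Q' ∈ Sl ∧ Q' ⊂ Q ∧
        ∀ Q2 ∈ Sl, Q2 ⊂ Q → Q' ⊆ Q2 → Q2 = Q'}, Q') :
    (1 / 2 : ℝ≥0∞) * dAvg g Q ≤ dAvg (EQ.indicator g) Q := by
  subst hSl hEQ
  set M : Set (Set (Rn n)) := {Q' | Q' ∈ {Q' | Q' ∈ S ∧ (2 : ℝ≥0∞) ^ (-(l : ℝ) - 1) < dAvg g Q' ∧
      dAvg g Q' ≤ (2 : ℝ≥0∞) ^ (-(l : ℝ))} ∧ Q' ⊂ Q ∧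
      ∀ Q2 ∈ {Q' | Q' ∈ S ∧ (2 : ℝ≥0∞) ^ (-(l : ℝ) - 1) < dAvg g Q' ∧
      dAvg g Q' ≤ (2 : ℝ≥0∞) ^ (-(l : ℝ))}, Q2 ⊂ Q → Q' ⊆ Q2 → Q2 = Q'} with hM
  set U : Set (Rn n) := ⋃ Q' ∈ M, Q' with hU
  obtain ⟨hQS, hQlow, hQhigh⟩ := hQ
  have hQdy : IsDyadicCube n Q := hS Q hQS
  have hQmeas := dyadic_measurable hQdy
  have hQvol := dyadic_volume hQdy
  have hMdy : ∀ Q' ∈ M, IsDyadicCube n Q' := fun Q' h => hS Q' h.1.1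
  have hMc : M.Countable := (dyadic_countable n).mono (fun Q' h => hMdy Q' h)
  have hMdisj : M.PairwiseDisjoint id := by
    intro Q1 h1 Q2 h2 hne
    simp only [Function.onFun, id]
    by_contra hcon
    rw [Set.not_disjoint_iff_nonempty_inter] at hcon
    rcases dyadic_nested (hMdy Q1 h1) (hMdy Q2 h2) hcon with hsub | hsub
    · exact hne ((h1.2.2 Q2 h2.1 h2.2.1 hsub).symm)
    · exact hne (h2.2.2 Q1 h1.1 h1.2.1 hsub)
  set μ := volume.withDensity g with hμ
  have hμapp : ∀ {A : Set (Rn n)}, MeasurableSet A → μ A = ∫⁻ x in A, g x :=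
    fun hA => withDensity_apply g hA
  have hUQ : U ⊆ Q := Set.iUnion₂_subset fun Q' h => h.2.1.subset
  have hUmeas : MeasurableSet U :=
    MeasurableSet.biUnion hMc fun Q' h => dyadic_measurable (hMdy Q' h)
  have hcube : ∀ Q' ∈ M, μ Q' ≤ (2:ℝ≥0∞)^(-(l:ℝ)) * volume Q' := by
    intro Q' h
    have hdy := hMdy Q' h
    have hv := dyadic_volume hdy
    have havg : dAvg g Q' ≤ (2:ℝ≥0∞)^(-(l:ℝ)) := h.1.2.2
    rw [hμapp (dyadic_measurable hdy)]
    have hint : (∫⁻ x in Q', g x) = dAvg g Q' * volume Q' := by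
      rw [dAvg, mul_comm (volume Q')⁻¹ _, mul_assoc,
        ENNReal.inv_mul_cancel hv.1 hv.2, mul_one]
    rw [hint]
    exact mul_le_mul_left havg _
  have hUbound : μ U ≤ (2:ℝ≥0∞)^(-(l:ℝ)) * volume U := by
    calc μ U ≤ ∑' Q' : M, μ (Q' : Set (Rn n)) := measure_biUnion_le μ hMc _
      _ ≤ ∑' Q' : M, (2:ℝ≥0∞)^(-(l:ℝ)) * volume (Q' : Set (Rn n)) :=
          ENNReal.tsum_le_tsum fun Q' => hcube Q' Q'.2
      _ = (2:ℝ≥0∞)^(-(l:ℝ)) * ∑' Q' : M, volume (Q' : Set (Rn n)) := ENNReal.tsum_mul_left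
      _ = (2:ℝ≥0∞)^(-(l:ℝ)) * volume U := by
          have hbu := measure_biUnion (μ := volume) hMc hMdisj (fun Q' h => dyadic_measurable (hMdy Q' h))
          simp only [id_eq] at hbu
          rw [← hbu]
  have hlow : (2:ℝ≥0∞)^(-(l:ℝ)) ≤ 2 * dAvg g Q := by
    have h1 : (2:ℝ≥0∞)^(-(l:ℝ)) = 2 * (2:ℝ≥0∞)^(-(l:ℝ)-1) := by
      have hx : (2:ℝ≥0∞)^((1:ℝ) + (-(l:ℝ)-1)) = (2:ℝ≥0∞)^(1:ℝ) * 2^(-(l:ℝ)-1) :=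
        ENNReal.rpow_add _ _ (by norm_num) (by norm_num)
      rw [show (1:ℝ) + (-(l:ℝ)-1) = -(l:ℝ) by ring] at hx
      rw [hx, ENNReal.rpow_one]
    rw [h1]
    exact mul_le_mul_right (le_of_lt hQlow) 2
  have hQint : μ Q = volume Q * dAvg g Q := by
    rw [hμapp hQmeas, dAvg, ← mul_assoc, ENNReal.mul_inv_cancel hQvol.1 hQvol.2, one_mul]
  have hUpack : volume U ≤ volume Q / 4 := by
    refine le_trans (measure_mono ?_) (hpack Q hQS)
    exact Set.iUnion₂_subset fun Q' h =>
      Set.subset_biUnion_of_mem (u := fun A : Set (Rn n) => A) (show Q' ∈ {Q'' | Q'' ∈ S ∧ Q'' ⊂ Q} from ⟨h.1.1, h.2.1⟩)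
  have hUfinal : μ U ≤ μ Q / 2 := by
    calc μ U ≤ (2:ℝ≥0∞)^(-(l:ℝ)) * volume U := hUbound
      _ ≤ (2 * dAvg g Q) * (volume Q / 4) :=
          mul_le_mul' hlow hUpack
      _ = (volume Q * dAvg g Q) / 2 := helper_half _ _
      _ = μ Q / 2 := by rw [hQint]
  have hEQmeas : MeasurableSet (Q \ U) := hQmeas.diff hUmeas
  have hsplit : μ Q ≤ μ (Q \ U) + μ U := by
    refine le_trans (measure_mono ?_) (measure_union_le _ _)
    intro x hx
    by_cases h : x ∈ U
    · exact Set.mem_union_right _ h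
    · exact Set.mem_union_left _ ⟨hx, h⟩
  have hμQfin : μ Q ≠ ∞ := by rw [hμapp hQmeas]; exact (hgl Q hQdy).ne
  have hmain : μ Q / 2 ≤ μ (Q \ U) := by
    have h1 : μ Q - μ Q / 2 ≤ μ (Q \ U) :=
      tsub_le_iff_right.mpr (le_trans hsplit (add_le_add_right hUfinal _))
    rwa [ENNReal.sub_half hμQfin] at h1
  have hEQint : dAvg ((Q \ U).indicator g) Q = (volume Q)⁻¹ * μ (Q \ U) := by
    rw [dAvg]
    congr 1
    rw [hμapp hEQmeas]
    calc ∫⁻ x in Q, (Q \ U).indicator g x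
        = ∫⁻ x in (Q \ U), g x ∂(volume.restrict Q) := lintegral_indicator hEQmeas g
      _ = ∫⁻ x in (Q \ U), g x := by
          rw [Measure.restrict_restrict hEQmeas, Set.inter_eq_left.mpr Set.diff_subset]
  have hgavg : dAvg g Q = (volume Q)⁻¹ * μ Q := by rw [dAvg, hμapp hQmeas]
  rw [hgavg, hEQint]
  calc (1/2 : ℝ≥0∞) * ((volume Q)⁻¹ * μ Q) = (volume Q)⁻¹ * (μ Q / 2) := by
        simp only [div_eq_mul_inv, one_div]; ring
    _ ≤ (volume Q)⁻¹ * μ (Q \ U) := mul_le_mul_right hmain _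


end Paper
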